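/- Let n ≥ 5, let A = 2^{1/n}·M with M the real n×n matrix with M_{ii} = 1 for 1 ≤ i ≤ n−1, M_{in} = 1/2 for 1 ≤ i ≤ n, and all other entries 0, and let H be a real n×n diagonal matrix with positive diagonal entries and determinant 1. Then the set S(HA) of shortest integer vectors of HA generates a finite-index subgroup of ℤⁿ if and only if H is the identity matrix. -/

import Mathlib

/-- The Euclidean norm of a vector in `ℝⁿ`. -/
noncomputable def eNorm {n : ℕ} (x : Fin n → ℝ) : ℝ :=
  Real.sqrt (∑ i, (x i) ^ 2)

/-- The Euclidean norm of `A v` for an integer vector `v`. -/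
noncomputable def latNorm {n : ℕ} (A : Matrix (Fin n) (Fin n) ℝ) (v : Fin n → ℤ) : ℝ :=
  eNorm (A.mulVec (fun i => (v i : ℝ)))

/-- The systole of `A`: the infimum (in fact minimum) of `‖A v‖` over nonzero
integer vectors `v ∈ ℤⁿ`. -/
noncomputable def syst {n : ℕ} (A : Matrix (Fin n) (Fin n) ℝ) : ℝ :=
  sInf {r | ∃ v : Fin n → ℤ, v ≠ 0 ∧ r = latNorm A v}

/-- The matrix `M` with `M i i = 1` for `i` in the upper-left `(n-1) × (n-1)` block,
last column constantly `1/2`, and all other entries `0`. -/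
noncomputable def Mmat (n : ℕ) : Matrix (Fin n) (Fin n) ℝ :=
  Matrix.of fun i j => if (j : ℕ) = n - 1 then 1 / 2 else if i = j then 1 else 0

/-- The matrix `A = 2^(1/n) • M` (which has determinant `1`). -/
noncomputable def Amat (n : ℕ) : Matrix (Fin n) (Fin n) ℝ :=
  ((2 : ℝ) ^ ((1 : ℝ) / n)) • Mmat n

namespace WR

variable {n : ℕ}

noncomputable def cc (n : ℕ) : ℝ := (2 : ℝ) ^ ((1 : ℝ) / n)

lemma cc_pos (n : ℕ) : 0 < cc n := Real.rpow_pos_of_pos (by norm_num) _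

lemma mulVec_M {L : Fin n} (hL : (L : ℕ) = n - 1) (x : Fin n → ℝ) (i : Fin n) :
    (Mmat n).mulVec x i = (if i = L then 0 else x i) + x L / 2 := by
  have : ∀ j : Fin n, (Mmat n) i j * x j
      = (if j = L then x L / 2 else 0) + (if j = i then (if i = L then 0 else x i) else 0) := by
    intro j
    simp only [Mmat, Matrix.of_apply]
    by_cases hj : j = L
    · rw [if_pos (show (j : ℕ) = n - 1 from hj ▸ hL), if_pos hj]
      by_cases hij : j = i
      · rw [if_pos hij, if_pos (hij ▸ hj : i = L), hj]; ring
      · rw [if_neg hij, hj]; ring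
    · have hjn : ¬ ((j : ℕ) = n - 1) := fun h => hj (Fin.ext (h.trans hL.symm))
      rw [if_neg hjn, if_neg hj]
      by_cases hij : j = i
      · have hiL : ¬ i = L := fun h => hj (hij.trans h)
        rw [if_pos hij, if_pos hij.symm, if_neg hiL, hij]; ring
      · rw [if_neg (fun h => hij h.symm), if_neg hij]; ring
  rw [Matrix.mulVec, dotProduct]
  simp only [this]
  rw [Finset.sum_add_distrib, Finset.sum_ite_eq' Finset.univ L, Finset.sum_ite_eq' Finset.univ i]
  simp [add_comm]

/-- the `i`-th real coordinate (before scaling) of `(diag a * A) v` -/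
noncomputable def coord (a : Fin n → ℝ) (L : Fin n) (v : Fin n → ℤ) (i : Fin n) : ℝ :=
  a i * ((if i = L then 0 else (v i : ℝ)) + (v L : ℝ) / 2)

noncomputable def qv (a : Fin n → ℝ) (L : Fin n) (v : Fin n → ℤ) : ℝ :=
  ∑ i, (coord a L v i) ^ 2

lemma latNorm_eq {L : Fin n} (hL : (L : ℕ) = n - 1) (a : Fin n → ℝ) (v : Fin n → ℤ) :
    latNorm (Matrix.diagonal a * Amat n) v = cc n * Real.sqrt (qv a L v) := by
  have h1 : ∀ i, (Matrix.diagonal a * Amat n).mulVec (fun i => (v i : ℝ)) i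
      = cc n * coord a L v i := by
    intro i
    rw [← Matrix.mulVec_mulVec, Matrix.mulVec_diagonal]
    show a i * (Amat n).mulVec _ i = _
    rw [Amat, Matrix.smul_mulVec]
    show a i * (cc n * (Mmat n).mulVec _ i) = _
    rw [mulVec_M hL]
    unfold coord
    ring
  unfold latNorm eNorm
  simp only [h1]
  have : ∑ i, (cc n * coord a L v i) ^ 2 = (cc n) ^ 2 * qv a L v := by
    unfold qv; rw [Finset.mul_sum]; congr 1; ext i; ring
  rw [this, Real.sqrt_mul (by positivity), Real.sqrt_sq (cc_pos n).le]


lemma qv_nonneg {a : Fin n → ℝ} {L : Fin n} {v : Fin n → ℤ} : 0 ≤ qv a L v :=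
  Finset.sum_nonneg fun i _ => sq_nonneg _

lemma qv_pos {a : Fin n → ℝ} {L : Fin n} (ha : ∀ i, 0 < a i) {v : Fin n → ℤ}
    (hv : v ≠ 0) : 0 < qv a L v := by
  rcases qv_nonneg.lt_or_eq with h | h
  · exact h
  exfalso
  apply hv
  have hz : ∀ i ∈ Finset.univ, (coord a L v i) ^ 2 = 0 := by
    rw [← Finset.sum_eq_zero_iff_of_nonneg (fun i _ => sq_nonneg _)]
    exact h.symm
  have hc : ∀ i, (if i = L then 0 else (v i : ℝ)) + (v L : ℝ) / 2 = 0 := by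
    intro i
    have := hz i (Finset.mem_univ i)
    rw [pow_eq_zero_iff (by norm_num)] at this
    unfold coord at this
    rcases mul_eq_zero.1 this with h' | h'
    · exact absurd h' (ha i).ne'
    · exact h'
  have hL0 : (v L : ℝ) = 0 := by
    have := hc L
    simp at this
    exact_mod_cast this
  funext i
  by_cases hi : i = L
  · rw [hi]; exact_mod_cast hL0
  · have := hc i
    rw [if_neg hi, hL0] at this
    have : (v i : ℝ) = 0 := by linarith
    exact_mod_cast this

lemma sum_sq_anal {a : Fin n → ℝ} {t : ℝ} (ht : 0 < t) (hta : ∀ i, t ≤ a i)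
    {w : Fin n → ℤ} {i₀ : Fin n} (hw : w i₀ ≠ 0)
    (h : ∑ i, (a i * (w i : ℝ)) ^ 2 = t ^ 2) :
    a i₀ = t ∧ (w = Pi.single i₀ 1 ∨ w = Pi.single i₀ (-1)) := by
  have hrest : 0 ≤ ∑ i ∈ Finset.univ.erase i₀, (a i * (w i : ℝ)) ^ 2 :=
    Finset.sum_nonneg fun i _ => sq_nonneg _
  have hsplit : (a i₀ * (w i₀ : ℝ)) ^ 2
      + ∑ i ∈ Finset.univ.erase i₀, (a i * (w i : ℝ)) ^ 2 = t ^ 2 := by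
    rw [Finset.add_sum_erase Finset.univ (fun i => (a i * (w i : ℝ)) ^ 2)
      (Finset.mem_univ i₀)]
    exact h
  have hw1 : (1 : ℤ) ≤ (w i₀) ^ 2 := by
    rcases hw.lt_or_gt with h' | h' <;> nlinarith
  have hw1' : (1 : ℝ) ≤ ((w i₀ : ℝ)) ^ 2 := by exact_mod_cast hw1
  have ha0 := hta i₀
  have hterm : (a i₀ * (w i₀ : ℝ)) ^ 2 ≤ t ^ 2 := by linarith
  have hterm2 : (a i₀) ^ 2 * ((w i₀ : ℝ)) ^ 2 ≤ t ^ 2 := by rw [← mul_pow]; exact hterm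
  have hta2 : t ^ 2 ≤ (a i₀) ^ 2 := by nlinarith
  have key : t ^ 2 * ((w i₀ : ℝ)) ^ 2 ≤ (a i₀) ^ 2 * ((w i₀ : ℝ)) ^ 2 :=
    mul_le_mul_of_nonneg_right hta2 (sq_nonneg _)
  have hsq : ((w i₀ : ℝ)) ^ 2 = 1 := by
    have hle : ((w i₀ : ℝ)) ^ 2 ≤ 1 := by nlinarith [mul_pos ht ht]
    exact le_antisymm hle hw1'
  have haeq : a i₀ = t := by
    have h_le : a i₀ ≤ t := by nlinarith
    exact le_antisymm h_le ha0
  have hwz : (w i₀ : ℤ) ^ 2 = 1 := by exact_mod_cast hsq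
  have hw10 : w i₀ = 1 ∨ w i₀ = -1 := by
    rcases Int.mul_eq_one_iff_eq_one_or_neg_one.1 (by nlinarith [hwz] : w i₀ * w i₀ = 1) with
      ⟨h1, _⟩ | ⟨h1, _⟩
    · exact Or.inl h1
    · exact Or.inr h1
  have hrest0 : ∀ j ∈ Finset.univ.erase i₀, (a j * (w j : ℝ)) ^ 2 = 0 := by
    rw [← Finset.sum_eq_zero_iff_of_nonneg (fun i _ => sq_nonneg _)]
    have hterm3 : (a i₀ * (w i₀ : ℝ)) ^ 2 = t ^ 2 := by
      rw [mul_pow, haeq, hsq, mul_one]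
    linarith
  have hwj : ∀ j, j ≠ i₀ → w j = 0 := by
    intro j hj
    have := hrest0 j (Finset.mem_erase.2 ⟨hj, Finset.mem_univ j⟩)
    rw [pow_eq_zero_iff (by norm_num)] at this
    rcases mul_eq_zero.1 this with h' | h'
    · exfalso; have h2 := hta j; rw [h'] at h2; linarith
    · exact_mod_cast h'
  refine ⟨haeq, ?_⟩
  rcases hw10 with h1 | h1
  · left; funext j
    by_cases hj : j = i₀
    · rw [hj, Pi.single_eq_same]; exact h1
    · rw [Pi.single_eq_of_ne hj]; exact hwj j hj
  · right; funext j
    by_cases hj : j = i₀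
    · rw [hj, Pi.single_eq_same]; exact h1
    · rw [Pi.single_eq_of_ne hj]; exact hwj j hj

lemma qv_even {a : Fin n → ℝ} {L : Fin n} {v : Fin n → ℤ} {j : ℤ} (hvL : v L = 2 * j) :
    qv a L v = ∑ i, (a i * (((if i = L then j else v i + j) : ℤ) : ℝ)) ^ 2 := by
  unfold qv coord
  apply Finset.sum_congr rfl
  intro i _
  rw [hvL]
  by_cases hi : i = L <;> simp [hi] <;> push_cast <;> ring

lemma qv_odd {a : Fin n → ℝ} {L : Fin n} {v : Fin n → ℤ} {t : ℝ} (hn : 5 ≤ n)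
    (hta : ∀ i, t ≤ a i) (ht : 0 < t) (hodd : Odd (v L)) : t ^ 2 < qv a L v := by
  have hterm : ∀ i : Fin n, t ^ 2 / 4 ≤ (coord a L v i) ^ 2 := by
    intro i
    have hodd2 : Odd (2 * (if i = L then 0 else v i) + v L) :=
      (even_two_mul (if i = L then 0 else v i)).add_odd hodd
    have h1 : (1 : ℤ) ≤ (2 * (if i = L then 0 else v i) + v L) ^ 2 := by
      rcases hodd2 with ⟨k, hk⟩
      rw [hk]
      rcases le_or_gt 0 k with h' | h' <;> nlinarith
    have h1' : (1 : ℝ) ≤ ((2 * (if i = L then 0 else v i) + v L : ℤ) : ℝ) ^ 2 := by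
      exact_mod_cast h1
    have hc : coord a L v i = a i * ((2 * (if i = L then 0 else v i) + v L : ℤ) : ℝ) / 2 := by
      unfold coord
      split <;> push_cast <;> ring
    rw [hc]
    have hai := hta i
    have hta2 : t ^ 2 ≤ (a i) ^ 2 := by nlinarith
    have hm : t ^ 2 * 1 ≤ (a i) ^ 2 * (((2 * (if i = L then 0 else v i) + v L : ℤ) : ℝ)) ^ 2 :=
      mul_le_mul hta2 h1' zero_le_one (sq_nonneg _)
    nlinarith [hm]
  have hsum : (n : ℝ) * (t ^ 2 / 4) ≤ qv a L v := by
    have := Finset.card_nsmul_le_sum Finset.univ (fun i => (coord a L v i) ^ 2) (t ^ 2 / 4)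
      (fun i _ => hterm i)
    simpa [nsmul_eq_mul, qv] using this
  have hn' : (5 : ℝ) ≤ (n : ℝ) := by exact_mod_cast hn
  nlinarith [sq_nonneg t]

/-- the lattice vector `w = (-1, ..., -1, 2)` -/
def ww (L : Fin n) : Fin n → ℤ := fun i => if i = L then 2 else -1

lemma ww_ne_zero {L : Fin n} : ww L ≠ 0 := by
  intro h
  have := congr_fun h L
  simp [ww] at this

lemma single_ne_zero' {i : Fin n} {m : ℤ} (hm : m ≠ 0) : Pi.single i m ≠ (0 : Fin n → ℤ) := by
  intro h
  have := congr_fun h i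
  rw [Pi.single_eq_same] at this
  exact hm this

lemma coord_single {a : Fin n → ℝ} {L i : Fin n} (hi : i ≠ L) (m : ℤ) (j : Fin n) :
    coord a L (Pi.single i m) j = if j = i then a i * (m : ℝ) else 0 := by
  have hsL : (Pi.single i m : Fin n → ℤ) L = 0 := by rw [Pi.single_eq_of_ne (Ne.symm hi)]
  unfold coord
  rw [hsL]
  by_cases hj : j = L
  · rw [if_pos hj, if_neg (fun h : j = i => hi (h ▸ hj))]
    simp
  · rw [if_neg hj, Pi.single_apply]
    by_cases hji : j = i
    · rw [if_pos hji, if_pos hji, hji]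
      simp
    · rw [if_neg hji, if_neg hji]
      simp

lemma qv_single {a : Fin n → ℝ} {L i : Fin n} (hi : i ≠ L) (m : ℤ) :
    qv a L (Pi.single i m) = (a i * (m : ℝ)) ^ 2 := by
  unfold qv
  have : ∀ j : Fin n, (coord a L (Pi.single i m) j) ^ 2
      = if j = i then (a i * (m : ℝ)) ^ 2 else 0 := by
    intro j
    rw [coord_single hi]
    by_cases hj : j = i <;> simp [hj]
  simp only [this]
  rw [Finset.sum_ite_eq' Finset.univ i]
  simp

lemma coord_ww {a : Fin n → ℝ} {L : Fin n} (j : Fin n) :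
    coord a L (ww L) j = if j = L then a L else 0 := by
  unfold coord ww
  by_cases hj : j = L <;> simp [hj] <;> ring

lemma qv_ww {a : Fin n → ℝ} {L : Fin n} : qv a L (ww L) = (a L) ^ 2 := by
  unfold qv
  have : ∀ j : Fin n, (coord a L (ww L) j) ^ 2 = if j = L then (a L) ^ 2 else 0 := by
    intro j
    rw [coord_ww]
    by_cases hj : j = L <;> simp [hj]
  simp only [this]
  rw [Finset.sum_ite_eq' Finset.univ L]
  simp

lemma latNorm_single {L : Fin n} (hL : (L : ℕ) = n - 1) {a : Fin n → ℝ} (ha : ∀ i, 0 < a i)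
    {i : Fin n} (hi : i ≠ L) :
    latNorm (Matrix.diagonal a * Amat n) (Pi.single i 1) = cc n * a i := by
  rw [latNorm_eq hL, qv_single hi]
  push_cast
  rw [mul_one, Real.sqrt_sq (ha i).le]

lemma latNorm_ww {L : Fin n} (hL : (L : ℕ) = n - 1) {a : Fin n → ℝ} (ha : ∀ i, 0 < a i) :
    latNorm (Matrix.diagonal a * Amat n) (ww L) = cc n * a L := by
  rw [latNorm_eq hL, qv_ww, Real.sqrt_sq (ha L).le]

lemma latNorm_nonneg {A : Matrix (Fin n) (Fin n) ℝ} {v : Fin n → ℤ} : 0 ≤ latNorm A v :=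
  Real.sqrt_nonneg _

lemma bddBelow_R (A : Matrix (Fin n) (Fin n) ℝ) :
    BddBelow {r | ∃ v : Fin n → ℤ, v ≠ 0 ∧ r = latNorm A v} :=
  ⟨0, fun _ ⟨_, _, hr⟩ => hr ▸ latNorm_nonneg⟩

lemma syst_le {A : Matrix (Fin n) (Fin n) ℝ} {v : Fin n → ℤ} (hv : v ≠ 0) :
    syst A ≤ latNorm A v :=
  csInf_le (bddBelow_R A) ⟨v, hv, rfl⟩

/-- classification of shortest vectors -/
lemma classify {L : Fin n} (hn : 5 ≤ n) (hL : (L : ℕ) = n - 1) {a : Fin n → ℝ}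
    (ha : ∀ i, 0 < a i) {v : Fin n → ℤ} (hv0 : v ≠ 0)
    (hlat : latNorm (Matrix.diagonal a * Amat n) v = syst (Matrix.diagonal a * Amat n)) :
    (∃ i, i ≠ L ∧ cc n * a i = syst (Matrix.diagonal a * Amat n) ∧
        (v = Pi.single i 1 ∨ v = Pi.single i (-1))) ∨
      (cc n * a L = syst (Matrix.diagonal a * Amat n) ∧ (v = ww L ∨ v = - ww L)) := by
  set B := Matrix.diagonal a * Amat n with hB
  set s := syst B with hs
  set t := s / cc n with htdef
  have hc := cc_pos n
  have hqvpos : 0 < qv a L v := qv_pos ha hv0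
  have hspos : 0 < s := by
    rw [← hlat, latNorm_eq hL]
    positivity
  have ht : 0 < t := div_pos hspos hc
  have hta : ∀ i, t ≤ a i := by
    intro i
    by_cases hi : i = L
    · rw [hi]
      have := syst_le (A := B) (ww_ne_zero (L := L))
      rw [latNorm_ww hL ha] at this
      rw [htdef, div_le_iff₀ hc]
      linarith [this]
    · have := syst_le (A := B) (single_ne_zero' (i := i) (m := 1) one_ne_zero)
      rw [latNorm_single hL ha hi] at this
      rw [htdef, div_le_iff₀ hc]
      linarith [this]
  have hct : cc n * t = s := by
    rw [htdef]; field_simp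
  have hqv : qv a L v = t ^ 2 := by
    have h1 : cc n * Real.sqrt (qv a L v) = s := by rw [← latNorm_eq hL]; exact hlat
    have h2 : Real.sqrt (qv a L v) = t := by
      rw [htdef]; field_simp [h1]; linarith [h1]
    have h3 := Real.sq_sqrt (qv_nonneg (a := a) (L := L) (v := v))
    rw [← h3, h2]
  rcases Int.even_or_odd (v L) with ⟨j, hj⟩ | hodd
  · -- even case
    have hvL : v L = 2 * j := by omega
    set w : Fin n → ℤ := fun i => if i = L then j else v i + j with hw
    have hqv2 : ∑ i, (a i * (w i : ℝ)) ^ 2 = t ^ 2 := by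
      rw [← hqv, qv_even hvL]
    have hex : ∃ i₀, w i₀ ≠ 0 := by
      by_cases hj0 : j = 0
      · have : ∃ i, v i ≠ 0 := by
          by_contra hcon
          push_neg at hcon
          exact hv0 (funext hcon)
        obtain ⟨i, hi⟩ := this
        have hiL : i ≠ L := by
          intro h; rw [h, hvL, hj0] at hi; exact hi (by ring)
        exact ⟨i, by rw [hw]; simp only [if_neg hiL, hj0, add_zero]; exact hi⟩
      · exact ⟨L, by rw [hw]; simp only [if_pos rfl]; exact hj0⟩
    obtain ⟨i₀, hi₀⟩ := hex
    obtain ⟨haeq, hwval⟩ := sum_sq_anal ht hta hi₀ hqv2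
    by_cases hi₀L : i₀ = L
    · -- v = ± ww
      right
      subst hi₀L
      constructor
      · rw [haeq]; exact hct
      have hjval : j = 1 ∨ j = -1 := by
        rcases hwval with h | h
        · left
          have := congr_fun h i₀
          rw [Pi.single_eq_same] at this
          rw [hw] at this; simpa using this
        · right
          have := congr_fun h i₀
          rw [Pi.single_eq_same] at this
          rw [hw] at this; simpa using this
      have hvi : ∀ i, i ≠ i₀ → v i = -j := by
        intro i hi
        have hwi : w i = 0 := by
          rcases hwval with h | h <;>
            · have := congr_fun h i
              rw [Pi.single_eq_of_ne hi] at this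
              exact this
        rw [hw] at hwi
        simp only [if_neg hi] at hwi
        omega
      rcases hjval with h | h
      · left
        funext i
        by_cases hi : i = i₀
        · rw [hi, hvL, h]; simp [ww]
        · rw [hvi i hi, h]; simp [ww, hi]
      · right
        funext i
        by_cases hi : i = i₀
        · rw [hi, hvL, h]; simp [ww]
        · rw [hvi i hi, h]; simp [ww, hi]
    · -- v = ± single i₀
      left
      refine ⟨i₀, hi₀L, by rw [haeq]; exact hct, ?_⟩
      have hj0 : j = 0 := by
        have hwL : w L = 0 := by
          rcases hwval with h | h <;>
            · have := congr_fun h L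
              rw [Pi.single_eq_of_ne (fun hh => hi₀L hh.symm)] at this
              exact this
        rw [hw] at hwL
        simpa using hwL
      have hvi : ∀ i, i ≠ i₀ → i ≠ L → v i = 0 := by
        intro i hi hiL
        have hwi : w i = 0 := by
          rcases hwval with h | h <;>
            · have := congr_fun h i
              rw [Pi.single_eq_of_ne hi] at this
              exact this
        rw [hw] at hwi
        simp only [if_neg hiL] at hwi
        omega
      have hvL0 : v L = 0 := by rw [hvL, hj0]; ring
      have hvi₀ : v i₀ = w i₀ := by
        rw [hw]; simp only [if_neg hi₀L, hj0, add_zero]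
      rcases hwval with h | h
      · left
        funext i
        by_cases hi : i = i₀
        · rw [hi, Pi.single_eq_same, hvi₀]
          have := congr_fun h i₀
          rw [Pi.single_eq_same] at this
          exact this
        · rw [Pi.single_eq_of_ne hi]
          by_cases hiL : i = L
          · rw [hiL]; exact hvL0
          · exact hvi i hi hiL
      · right
        funext i
        by_cases hi : i = i₀
        · rw [hi, Pi.single_eq_same, hvi₀]
          have := congr_fun h i₀
          rw [Pi.single_eq_same] at this
          exact this
        · rw [Pi.single_eq_of_ne hi]
          by_cases hiL : i = L
          · rw [hiL]; exact hvL0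
          · exact hvi i hi hiL
  · -- odd case: contradiction
    exfalso
    have := qv_odd hn hta ht hodd
    rw [hqv] at this
    exact lt_irrefl _ this

lemma not_le_ker {G : Type*} [AddCommGroup G] {H : AddSubgroup G} (hidx : H.index ≠ 0)
    (ψ : G →+ ℤ) (hsurj : Function.Surjective ψ) : ¬ H ≤ ψ.ker := by
  intro hle
  have h1 := AddSubgroup.index_dvd_of_le hle
  rw [AddSubgroup.index_ker] at h1
  have hr : ψ.range = ⊤ := AddMonoidHom.range_eq_top_of_surjective ψ hsurj
  rw [hr] at h1
  have htop : Nat.card (⊤ : AddSubgroup ℤ) = 0 := by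
    rw [Nat.card_congr AddSubgroup.topEquiv.toEquiv]
    exact Nat.card_eq_zero_of_infinite
  rw [htop] at h1
  exact hidx (zero_dvd_iff.1 h1)


lemma qv_ge_one {L : Fin n} (hn : 5 ≤ n) {a : Fin n → ℝ} (ha1 : ∀ i, a i = 1)
    {v : Fin n → ℤ} (hv0 : v ≠ 0) : 1 ≤ qv a L v := by
  rcases Int.even_or_odd (v L) with ⟨j, hj⟩ | hodd
  · have hvL : v L = 2 * j := by omega
    rw [qv_even hvL]
    set w : Fin n → ℤ := fun i => if i = L then j else v i + j with hw
    have hex : ∃ i₀, w i₀ ≠ 0 := by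
      by_cases hj0 : j = 0
      · have hex2 : ∃ i, v i ≠ 0 := by
          by_contra hcon
          push_neg at hcon
          exact hv0 (funext hcon)
        obtain ⟨i, hi⟩ := hex2
        have hiL : i ≠ L := by
          intro h; rw [h, hvL, hj0] at hi; exact hi (by ring)
        exact ⟨i, by rw [hw]; simp only [if_neg hiL, hj0, add_zero]; exact hi⟩
      · exact ⟨L, by rw [hw]; simp only [if_pos rfl]; exact hj0⟩
    obtain ⟨i₀, hi₀⟩ := hex
    have h1 : (1 : ℝ) ≤ (a i₀ * ((w i₀ : ℤ) : ℝ)) ^ 2 := by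
      rw [ha1 i₀, one_mul]
      have h2 : (1 : ℤ) ≤ (w i₀) ^ 2 := by
        rcases hi₀.lt_or_gt with h' | h' <;> nlinarith
      exact_mod_cast h2
    calc (1 : ℝ) ≤ (a i₀ * ((w i₀ : ℤ) : ℝ)) ^ 2 := h1
      _ ≤ ∑ i, (a i * ((w i : ℤ) : ℝ)) ^ 2 :=
          Finset.single_le_sum (f := fun i => (a i * ((w i : ℤ) : ℝ)) ^ 2)
            (fun i _ => sq_nonneg _) (Finset.mem_univ i₀)
  · have hta : ∀ i, (1 : ℝ) ≤ a i := fun i => (ha1 i).ge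
    have := qv_odd hn hta one_pos hodd
    rw [one_pow] at this
    linarith

lemma syst_eq_cc {L : Fin n} (hn : 5 ≤ n) (hL : (L : ℕ) = n - 1) {a : Fin n → ℝ}
    (ha1 : ∀ i, a i = 1) : syst (Matrix.diagonal a * Amat n) = cc n := by
  have h0L : (⟨0, by omega⟩ : Fin n) ≠ L := by
    intro h
    have h2 : (0 : ℕ) = n - 1 := by
      have := congr_arg Fin.val h
      rw [hL] at this
      simpa using this
    omega
  have ha : ∀ i, 0 < a i := fun i => by rw [ha1 i]; norm_num
  apply le_antisymm
  · have := syst_le (A := Matrix.diagonal a * Amat n)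
      (single_ne_zero' (i := (⟨0, by omega⟩ : Fin n)) (m := 1) one_ne_zero)
    rwa [latNorm_single hL ha h0L, ha1, mul_one] at this
  · apply le_csInf
    · exact ⟨latNorm (Matrix.diagonal a * Amat n) (Pi.single (⟨0, by omega⟩ : Fin n) 1),
        Pi.single (⟨0, by omega⟩ : Fin n) 1, single_ne_zero' one_ne_zero, rfl⟩
    rintro r ⟨v, hv0, rfl⟩
    rw [latNorm_eq hL]
    have h1 : 1 ≤ Real.sqrt (qv a L v) := by
      rw [show (1 : ℝ) = Real.sqrt 1 by simp]
      exact Real.sqrt_le_sqrt (qv_ge_one hn ha1 hv0)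
    exact le_mul_of_one_le_right (cc_pos n).le h1

end WR

open WR

/-- For `n ≥ 5`, `A = 2^(1/n) • M` and `H` diagonal with positive entries and determinant
`1`: the set of shortest integer vectors of `H A` generates a finite-index subgroup of
`ℤⁿ` if and only if `H` is the identity matrix. -/
theorem wellRounded_iff_id {n : ℕ} (hn : 5 ≤ n) (a : Fin n → ℝ) (ha : ∀ i, 0 < a i)
    (hdet : (Matrix.diagonal a).det = 1) :
    (AddSubgroup.closure
        {v : Fin n → ℤ | v ≠ 0 ∧
          latNorm (Matrix.diagonal a * Amat n) v =
            syst (Matrix.diagonal a * Amat n)}).index ≠ 0 ↔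
      Matrix.diagonal a = 1 := by
  set B := Matrix.diagonal a * Amat n with hB
  set L : Fin n := ⟨n - 1, by omega⟩ with hLdef
  have hL : (L : ℕ) = n - 1 := rfl
  set S := {v : Fin n → ℤ | v ≠ 0 ∧ latNorm B v = syst B} with hS
  constructor
  · -- finite index → identity
    intro hidx
    -- step 1: there is a shortest vector with nonzero last coordinate
    have hsurjL : Function.Surjective (Pi.evalAddMonoidHom (fun _ : Fin n => ℤ) L) :=
      fun m => ⟨Pi.single L m, by simp⟩
    have h1 := not_le_ker hidx (Pi.evalAddMonoidHom (fun _ : Fin n => ℤ) L) hsurjL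
    have hex1 : ∃ v ∈ S, v L ≠ 0 := by
      by_contra hcon
      push_neg at hcon
      apply h1
      rw [AddSubgroup.closure_le]
      intro v hv
      exact hcon v hv
    obtain ⟨v₁, hv₁S, hv₁L⟩ := hex1
    have haL : cc n * a L = syst B := by
      rcases classify hn hL ha hv₁S.1 hv₁S.2 with ⟨i, hiL, _, hv⟩ | ⟨h, _⟩
      · exfalso
        rcases hv with h | h <;>
          · rw [h] at hv₁L
            exact hv₁L (Pi.single_eq_of_ne (Ne.symm hiL) _)
      · exact h
    -- step 2: all diagonal entries give the systole
    have hall : ∀ i, cc n * a i = syst B := by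
      intro i₀
      by_cases hi₀L : i₀ = L
      · rw [hi₀L]; exact haL
      by_contra hne
      set ψ : (Fin n → ℤ) →+ ℤ :=
        AddMonoidHom.mk' (fun v => 2 * v i₀ + v L) (fun x y => by
          simp only [Pi.add_apply]; ring) with hψ
      have hsurj : Function.Surjective ψ := by
        intro m
        refine ⟨Pi.single L m, ?_⟩
        show 2 * (Pi.single L m : Fin n → ℤ) i₀ + (Pi.single L m : Fin n → ℤ) L = m
        rw [Pi.single_eq_of_ne hi₀L, Pi.single_eq_same]
        ring
      apply not_le_ker hidx ψ hsurj
      rw [AddSubgroup.closure_le]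
      intro v hv
      show ψ v = 0
      rcases classify hn hL ha hv.1 hv.2 with ⟨i, hiL, hai, hvv⟩ | ⟨_, hvv⟩
      · have hii₀ : i ≠ i₀ := fun h => hne (h ▸ hai)
        rcases hvv with h | h <;>
          · rw [h]
            show 2 * (Pi.single i _ : Fin n → ℤ) i₀ + (Pi.single i _ : Fin n → ℤ) L = 0
            rw [Pi.single_eq_of_ne (Ne.symm hii₀), Pi.single_eq_of_ne (Ne.symm hiL)]
            ring
      · rcases hvv with h | h <;>
          · rw [h]
            show 2 * _ + _ = (0 : ℤ)
            simp [ww, hi₀L]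
    -- step 3: all entries are equal, hence 1
    have hprod : ∏ i, a i = 1 := by rw [← Matrix.det_diagonal]; exact hdet
    set t : ℝ := syst B / cc n with htdef
    have hat : ∀ i, a i = t := by
      intro i
      rw [htdef, ← hall i, mul_comm, mul_div_assoc, div_self (cc_pos n).ne', mul_one]
    have htn : t ^ n = 1 := by
      rw [← hprod]
      simp only [hat]
      rw [Finset.prod_const, Finset.card_univ, Fintype.card_fin]
    have ht0 : 0 < t := (hat L) ▸ ha L
    have ht1 : t = 1 := by
      rcases lt_trichotomy t 1 with h | h | h
      · exfalso
        have := pow_lt_one₀ ht0.le h (by omega : n ≠ 0)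
        rw [htn] at this
        exact lt_irrefl _ this
      · exact h
      · exfalso
        have := one_lt_pow₀ h (by omega : n ≠ 0)
        rw [htn] at this
        exact lt_irrefl _ this
    have ha1 : a = fun _ => (1 : ℝ) := funext fun i => (hat i).trans ht1
    rw [ha1]
    exact Matrix.diagonal_one
  · -- identity → finite index
    intro h1
    have ha1 : ∀ i, a i = 1 := by
      intro i
      have h2 : Matrix.diagonal a i i = (1 : Matrix (Fin n) (Fin n) ℝ) i i := by rw [h1]
      rwa [Matrix.diagonal_apply_eq, Matrix.one_apply_eq] at h2
    have hsyst : syst B = cc n := syst_eq_cc hn hL ha1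
    -- membership of the basic short vectors
    have heS : ∀ i : Fin n, i ≠ L → Pi.single i 1 ∈ S := by
      intro i hiL
      refine ⟨single_ne_zero' one_ne_zero, ?_⟩
      rw [latNorm_single hL ha hiL, ha1 i, mul_one, hsyst]
    have hwwS : ww L ∈ S := by
      refine ⟨ww_ne_zero, ?_⟩
      rw [latNorm_ww hL ha, ha1 L, mul_one, hsyst]
    -- the mod-2 reduction homomorphism
    set φ : (Fin n → ℤ) →+ (Fin n → ZMod 2) :=
      AddMonoidHom.mk' (fun v i => ((v i : ZMod 2))) (fun x y => by
        funext i
        simp [Pi.add_apply]) with hφ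
    have hker : φ.ker ≤ AddSubgroup.closure S := by
      intro v hv
      have hdvd : ∀ i, 2 ∣ v i := by
        intro i
        have h2 : φ v = 0 := hv
        have h3 : ((v i : ZMod 2)) = 0 := congr_fun h2 i
        exact (ZMod.intCast_zmod_eq_zero_iff_dvd (v i) 2).1 (by exact_mod_cast h3)
      rw [← Finset.univ_sum_single v]
      apply AddSubgroup.sum_mem
      intro i _
      by_cases hiL : i = L
      · rw [hiL]
        obtain ⟨k, hk⟩ := hdvd L
        have key : (Pi.single L (v L) : Fin n → ℤ)
            = k • (ww L) + ∑ j ∈ Finset.univ.erase L, k • (Pi.single j 1 : Fin n → ℤ) := by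
          funext i'
          rw [Pi.add_apply, Pi.smul_apply, Finset.sum_apply]
          have hsum : ∀ j ∈ Finset.univ.erase L,
              (k • (Pi.single j 1 : Fin n → ℤ)) i' = if i' = j then k else 0 := by
            intro j _
            rw [Pi.smul_apply, Pi.single_apply]
            by_cases hj : i' = j <;> simp [hj]
          rw [Finset.sum_congr rfl hsum, Finset.sum_ite_eq (Finset.univ.erase L) i']
          by_cases hi' : i' = L
          · rw [hi', Pi.single_eq_same]
            simp [ww, hk]
            ring
          · rw [Pi.single_eq_of_ne hi']
            simp [Finset.mem_erase, hi', ww]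
        rw [key]
        apply AddSubgroup.add_mem
        · exact AddSubgroup.zsmul_mem _ (AddSubgroup.subset_closure hwwS) k
        · apply AddSubgroup.sum_mem
          intro j hj
          exact AddSubgroup.zsmul_mem _
            (AddSubgroup.subset_closure (heS j (Finset.mem_erase.1 hj).1)) k
      · have key : (Pi.single i (v i) : Fin n → ℤ) = (v i) • (Pi.single i 1 : Fin n → ℤ) := by
          funext i'
          rw [Pi.smul_apply, Pi.single_apply, Pi.single_apply]
          by_cases hi' : i' = i <;> simp [hi']
        rw [key]
        exact AddSubgroup.zsmul_mem _ (AddSubgroup.subset_closure (heS i hiL)) _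
    have hdvd2 := AddSubgroup.index_dvd_of_le hker
    have hker_ne : φ.ker.index ≠ 0 := by
      rw [AddSubgroup.index_ker]
      refine Nat.card_ne_zero.2 ⟨⟨0, ⟨0, map_zero φ⟩⟩, ?_⟩
      infer_instance
    intro h0
    rw [h0] at hdvd2
    exact hker_ne (zero_dvd_iff.1 hdvd2)
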